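/- No 3-regular, 3-connected, triangle-free graph admits a P3-cutset or a strong parity star-cutset. -/

import Mathlib

open SimpleGraph

variable {V : Type*}

/-- A walk is an *induced (chordless) path* if it is a path and every edge of `G` joining
two of its vertices is an edge of the path. -/
def IsIndPath (G : SimpleGraph V) {u v : V} (p : G.Walk u v) : Prop :=
  p.IsPath ∧ ∀ x ∈ p.support, ∀ y ∈ p.support, G.Adj x y → s(x, y) ∈ p.edges

/-- The interior (set of internal vertices) of a walk from `u` to `v`. -/
def interiorSet {G : SimpleGraph V} {u v : V} (p : G.Walk u v) : Set V :=
  {x | x ∈ p.support ∧ x ≠ u ∧ x ≠ v}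

/-- An *induced cycle*: a cycle such that every edge of `G` joining two of its vertices is an
edge of the cycle. -/
def IsIndCycle (G : SimpleGraph V) {u : V} (c : G.Walk u u) : Prop :=
  c.IsCycle ∧ ∀ x ∈ c.support, ∀ y ∈ c.support, G.Adj x y → s(x, y) ∈ c.edges

/-- A *pentagraph*: every cycle has length at least five, and every induced cycle of odd
length has length exactly five. -/
def IsPentagraph (G : SimpleGraph V) : Prop :=
  (∀ (u : V) (c : G.Walk u u), c.IsCycle → 5 ≤ c.length) ∧
  (∀ (u : V) (c : G.Walk u u), IsIndCycle G c → Odd c.length → c.length = 5)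

/-- Removing the vertex set `X` disconnects `G`: two vertices outside `X` are not joined by
any path avoiding `X`. -/
def RemovalDisconnects (G : SimpleGraph V) (X : Set V) : Prop :=
  ∃ a b : ↥(Xᶜ), ¬ (G.induce Xᶜ).Reachable a b

/-- `G` admits a `P₃`-cutset: an induced three-vertex path whose deletion disconnects `G`. -/
def HasP3Cutset (G : SimpleGraph V) : Prop :=
  ∃ v₁ v₂ v₃ : V, G.Adj v₁ v₂ ∧ G.Adj v₂ v₃ ∧ ¬ G.Adj v₁ v₃ ∧ v₁ ≠ v₃ ∧
    RemovalDisconnects G ({v₁, v₂, v₃} : Set V)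

/-- `A` is (the vertex set of) a connected component of `G ∖ X`. -/
def IsCompOf (G : SimpleGraph V) (X : Set V) (A : Set V) : Prop :=
  A.Nonempty ∧ A ⊆ Xᶜ ∧ (G.induce A).Connected ∧
    ∀ u ∈ A, ∀ w ∈ Xᶜ, G.Adj u w → w ∈ A

/-- `G` admits a strong parity star-cutset. -/
def HasStrongParityStarCutset (G : SimpleGraph V) : Prop :=
  ∃ X : Set V, RemovalDisconnects G X ∧
    ∃ x ∈ X, (∀ y ∈ X, y ≠ x → G.Adj x y) ∧
      ∃ A : Set V, IsCompOf G X A ∧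
        (∀ y ∈ X, y ≠ x → ∀ z ∈ X, z ≠ x → y ≠ z →
          ∃ p : G.Walk y z, IsIndPath G p ∧ Even p.length ∧ interiorSet p ⊆ A) ∧
        (∃ a ∈ A, G.Adj x a)

/-- `G` admits a clique cutset. -/
def HasCliqueCutset (G : SimpleGraph V) : Prop :=
  ∃ X : Set V, G.IsClique X ∧ RemovalDisconnects G X

/-- Vertices of the Petersen graph: 2-element subsets of a 5-element set. -/
abbrev KVert : Type := {s : Finset (Fin 5) // s.card = 2}

/-- The Petersen graph, as the Kneser graph on 2-element subsets of a 5-element set. -/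
def petersen : SimpleGraph KVert where
  Adj a b := Disjoint (a : Finset (Fin 5)) (b : Finset (Fin 5))
  symm := ⟨fun a b h => h.symm⟩
  loopless := by
    constructor
    intro a h
    change Disjoint (a : Finset (Fin 5)) (a : Finset (Fin 5)) at h
    rw [disjoint_self] at h
    have h2 := a.2
    simp [h] at h2

def pA : KVert := ⟨{0, 1}, by decide⟩
def pB : KVert := ⟨{2, 3}, by decide⟩

/-- The Petersen graph minus one edge. -/
def petersen0 : SimpleGraph KVert := petersen.deleteEdges {s(pA, pB)}

/-- The Petersen graph minus one vertex. -/
def petersen1 : SimpleGraph {x : KVert // x ≠ pA} := petersen.induce {x : KVert | x ≠ pA}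

/-- The Petersen graph minus two adjacent vertices. -/
def petersen2 : SimpleGraph {x : KVert // x ≠ pA ∧ x ≠ pB} :=
  petersen.induce {x : KVert | x ≠ pA ∧ x ≠ pB}

/-- Two nonadjacent vertices are *linked*: joined by two induced paths, both of length at
least three, of different parity. -/
def Linked (H : SimpleGraph V) (s t : V) : Prop :=
  ∃ (p q : H.Walk s t), IsIndPath H p ∧ IsIndPath H q ∧
    3 ≤ p.length ∧ 3 ≤ q.length ∧ p.length % 2 ≠ q.length % 2

/-- Two vertices are *odd-linked*: joined by an induced path of odd length at least five. -/
def OddLinked (H : SimpleGraph V) (s t : V) : Prop :=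
  ∃ p : H.Walk s t, IsIndPath H p ∧ Odd p.length ∧ 5 ≤ p.length

/-- A *jump* over a hole with vertex set `C`: an induced path whose ends are distinct,
nonadjacent vertices of `C` and whose other vertices avoid `C`. -/
def IsJump (G : SimpleGraph V) (C : Set V) {s t : V} (P : G.Walk s t) : Prop :=
  IsIndPath G P ∧ s ∈ C ∧ t ∈ C ∧ s ≠ t ∧ ¬ G.Adj s t ∧
    ∀ x ∈ P.support, x ∈ C → x = s ∨ x = t

/-- A jump *across* the vertex `c` of `C`. -/
def IsJumpAcross (G : SimpleGraph V) (C : Set V) {s t : V} (P : G.Walk s t) (c : V) : Prop :=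
  IsJump G C P ∧ c ∈ C ∧ G.Adj c s ∧ G.Adj c t

/-- A *local* jump: no vertex of `C` other than `c, s, t` has a neighbour in the interior. -/
def IsLocalJump (G : SimpleGraph V) (C : Set V) {s t : V} (P : G.Walk s t) : Prop :=
  IsJump G C P ∧ ∃ c : V, c ∈ C ∧ G.Adj c s ∧ G.Adj c t ∧
    ∀ x ∈ C, x ≠ c → x ≠ s → x ≠ t → ∀ y ∈ interiorSet P, ¬ G.Adj x y

/-- A *short* jump: a jump of length three. -/
def IsShortJump (G : SimpleGraph V) (C : Set V) {s t : V} (P : G.Walk s t) : Prop :=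
  IsJump G C P ∧ P.length = 3

/-- `G` is three-connected. -/
def ThreeConnected (G : SimpleGraph V) : Prop :=
  4 ≤ Nat.card V ∧ ∀ S : Set V, S.ncard < 3 → (G.induce Sᶜ).Connected


private lemma aux_walk_of_induce {G : SimpleGraph V} {s : Set V} :
    ∀ {a b : ↥s} (_ : (G.induce s).Walk a b),
      ∃ q : G.Walk (a : V) (b : V), ∀ v ∈ q.support, v ∈ s := by
  intro a b p
  induction p with
  | nil => exact ⟨SimpleGraph.Walk.nil, by simp⟩
  | @cons u c d h p ih =>
    obtain ⟨q, hq⟩ := ih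
    refine ⟨SimpleGraph.Walk.cons (show G.Adj (u : V) (c : V) from h) q, ?_⟩
    intro v hv
    rw [SimpleGraph.Walk.support_cons, List.mem_cons] at hv
    rcases hv with hv | hv
    · subst hv; exact u.2
    · exact hq v hv

private lemma aux_induce_reach {G : SimpleGraph V} {s : Set V} :
    ∀ {a b : V} (p : G.Walk a b), (∀ v ∈ p.support, v ∈ s) →
      ∀ (ha : a ∈ s) (hb : b ∈ s), (G.induce s).Reachable ⟨a, ha⟩ ⟨b, hb⟩ := by
  intro a b p
  induction p with
  | nil => intro _ ha hb; rfl
  | @cons u c d h p ih =>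
    intro hp ha hb
    have hc : c ∈ s := hp c (by simp)
    have hadj : (G.induce s).Adj ⟨u, ha⟩ ⟨c, hc⟩ := h
    exact hadj.reachable.trans (ih (fun v hv => hp v (by simp [hv])) hc hb)

private lemma aux_avoid {G : SimpleGraph V} {X : Set V} {x w : V} (hw : w ∉ X)
    (hnx : ∀ u, G.Adj x u → u ∈ X ∪ {w}) :
    ∀ {a t : V} (p : G.Walk a t), w = t → (∀ v ∈ p.support, v ∉ X \ {x}) → a ∉ X →
      ∃ q : G.Walk a w, ∀ v ∈ q.support, v ∉ X := by
  intro a t p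
  induction p with
  | nil =>
    intro ht _ ha
    subst ht
    exact ⟨SimpleGraph.Walk.nil, by simp [ha]⟩
  | @cons u c d h p ih =>
    intro ht hp ha
    subst ht
    by_cases hc : c = x
    · subst hc
      have hmem : u ∈ X ∪ {w} := hnx u h.symm
      have huw : w = u := by
        rcases hmem with h1 | h1
        · exact absurd h1 ha
        · exact h1.symm
      subst huw
      exact ⟨SimpleGraph.Walk.nil, by simp [ha]⟩
    · have hcX : c ∉ X := by
        have h1 := hp c (by simp)
        intro hcc
        exact h1 ⟨hcc, hc⟩
      obtain ⟨q, hq⟩ := ih rfl (fun v hv => hp v (by simp [hv])) hcX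
      refine ⟨SimpleGraph.Walk.cons h q, ?_⟩
      intro v hv
      rw [SimpleGraph.Walk.support_cons, List.mem_cons] at hv
      rcases hv with hv | hv
      · subst hv; exact ha
      · exact hq v hv

private lemma aux_key {G : SimpleGraph V} {X : Set V} {x w : V} (hw : w ∉ X)
    (hnx : ∀ u, G.Adj x u → u ∈ X ∪ {w}) (hd : RemovalDisconnects G X) :
    RemovalDisconnects G (X \ {x}) := by
  obtain ⟨a, b, hab⟩ := hd
  have hmem : ∀ c : V, c ∉ X → c ∈ ((X \ {x})ᶜ : Set V) := by
    intro c hc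
    simp only [Set.mem_compl_iff, Set.mem_diff, not_and]
    intro h1; exact absurd h1 hc
  have hnR : ¬ ((∃ q : G.Walk (a : V) w, ∀ v ∈ q.support, v ∉ X) ∧
      (∃ q : G.Walk (b : V) w, ∀ v ∈ q.support, v ∉ X)) := by
    rintro ⟨⟨qa, hqa⟩, ⟨qb, hqb⟩⟩
    apply hab
    have hsup : ∀ v ∈ (qa.append qb.reverse).support, v ∈ (Xᶜ : Set V) := by
      intro v hv
      rw [SimpleGraph.Walk.support_append] at hv
      rcases List.mem_append.mp hv with hv | hv
      · exact hqa v hv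
      · have h2 : v ∈ qb.reverse.support := List.mem_of_mem_tail hv
        rw [SimpleGraph.Walk.support_reverse] at h2
        exact hqb v (List.mem_reverse.mp h2)
    have := aux_induce_reach (s := (Xᶜ : Set V)) (qa.append qb.reverse) hsup a.2 b.2
    simpa using this
  have hstep : ∀ (c : V) (hcX : c ∉ X), ¬ (∃ q : G.Walk c w, ∀ v ∈ q.support, v ∉ X) →
      ¬ (G.induce ((X \ {x})ᶜ : Set V)).Reachable ⟨c, hmem c hcX⟩ ⟨w, hmem w hw⟩ := by
    intro c hcX hcR hreach
    obtain ⟨p⟩ := hreach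
    obtain ⟨q, hq⟩ := aux_walk_of_induce p
    refine hcR (aux_avoid hw hnx q rfl ?_ hcX)
    intro v hv
    have := hq v hv
    simpa using this
  rw [not_and_or] at hnR
  rcases hnR with hR | hR
  · exact ⟨⟨a, hmem a a.2⟩, ⟨w, hmem w hw⟩, hstep a a.2 hR⟩
  · exact ⟨⟨b, hmem b b.2⟩, ⟨w, hmem w hw⟩, hstep b b.2 hR⟩

private lemma aux_no_rd {G : SimpleGraph V} (hconn : ThreeConnected G) {S : Set V}
    (hS : S.ncard < 3) : ¬ RemovalDisconnects G S := by
  rintro ⟨a, b, hab⟩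
  exact hab ((hconn.2 S hS).preconnected a b)

private lemma aux_pair_ncard (v1 v3 : V) : ({v1, v3} : Set V).ncard ≤ 2 := by
  have h := Set.ncard_insert_le v1 ({v3} : Set V)
  simpa using h

/-- no 3-regular, 3-connected, triangle-free graph admits a P₃-cutset or a
strong parity star-cutset. -/
theorem cubic_no_cutsets {V : Type*} [Fintype V] (G : SimpleGraph V)
    (hreg : ∀ v : V, (G.neighborSet v).ncard = 3)
    (hconn : ThreeConnected G) (htri : G.CliqueFree 3) :
    ¬ HasP3Cutset G ∧ ¬ HasStrongParityStarCutset G := by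
  have hfin : ∀ s : Set V, s.Finite := fun s => Set.toFinite s
  constructor
  · rintro ⟨v1, v2, v3, h12, h23, h13, hne, hd⟩
    obtain ⟨w, hwN, hwne⟩ : ∃ w ∈ G.neighborSet v2, w ∉ ({v1, v3} : Set V) := by
      by_contra hcon
      push_neg at hcon
      have h1 := Set.ncard_le_ncard hcon (hfin _)
      have h2 := aux_pair_ncard v1 v3
      rw [hreg v2] at h1
      omega
    have hw1 : w ≠ v1 := fun h => hwne (by simp [h])
    have hw3 : w ≠ v3 := fun h => hwne (by simp [h])
    have hw2 : w ≠ v2 := fun h => G.irrefl (h ▸ hwN)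
    have hwX : w ∉ ({v1, v2, v3} : Set V) := by simp [hw1, hw2, hw3]
    have htrip : ({v1, v3, w} : Set V).ncard = 3 := by
      rw [Set.ncard_insert_of_notMem (by simp [hne, Ne.symm hw1]) (hfin _),
        Set.ncard_insert_of_notMem (by simp [Ne.symm hw3]) (hfin _),
        Set.ncard_singleton]
    have hNeq : ({v1, v3, w} : Set V) = G.neighborSet v2 := by
      apply Set.eq_of_subset_of_ncard_le
      · intro u hu
        rcases hu with h | h | h
        · exact h ▸ h12.symm
        · exact h ▸ h23
        · exact h ▸ hwN
      · rw [hreg v2, htrip]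
      · exact hfin _
    have hnx : ∀ u, G.Adj v2 u → u ∈ ({v1, v2, v3} : Set V) ∪ {w} := by
      intro u hu
      have : u ∈ ({v1, v3, w} : Set V) := hNeq ▸ hu
      rcases this with h | h | h
      · exact Or.inl (by simp [h])
      · exact Or.inl (by simp [h])
      · exact Or.inr h
    have hrd := aux_key hwX hnx hd
    refine aux_no_rd hconn ?_ hrd
    have hsub : ({v1, v2, v3} : Set V) \ {v2} ⊆ {v1, v3} := by
      rintro u ⟨hu, hu2⟩
      rcases hu with h | h | h
      · exact Or.inl h
      · exact absurd h hu2
      · exact Or.inr h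
    have := Set.ncard_le_ncard hsub (hfin _)
    have := aux_pair_ncard v1 v3
    omega
  · rintro ⟨X, hd, x, hxX, hXadj, A, hA, -, a, haA, hxa⟩
    have haX : a ∉ X := hA.2.1 haA
    by_cases hbig : ∃ y ∈ X \ {x}, ∃ z ∈ X \ {x}, y ≠ z
    · obtain ⟨y, ⟨hyX, hyx⟩, z, ⟨hzX, hzx⟩, hyz⟩ := hbig
      simp only [Set.mem_singleton_iff] at hyx hzx
      have hxy : G.Adj x y := hXadj y hyX hyx
      have hxz : G.Adj x z := hXadj z hzX hzx
      have hya : y ≠ a := fun h => haX (h ▸ hyX)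
      have hza : z ≠ a := fun h => haX (h ▸ hzX)
      have htrip : ({y, z, a} : Set V).ncard = 3 := by
        rw [Set.ncard_insert_of_notMem (by simp [hyz, hya]) (hfin _),
          Set.ncard_insert_of_notMem (by simp [hza]) (hfin _),
          Set.ncard_singleton]
      have hNeq : ({y, z, a} : Set V) = G.neighborSet x := by
        apply Set.eq_of_subset_of_ncard_le
        · intro u hu
          rcases hu with h | h | h
          · exact h ▸ hxy
          · exact h ▸ hxz
          · exact h ▸ hxa
        · rw [hreg x, htrip]
        · exact hfin _
      have hnx : ∀ u, G.Adj x u → u ∈ X ∪ {a} := by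
        intro u hu
        have : u ∈ ({y, z, a} : Set V) := hNeq ▸ hu
        rcases this with h | h | h
        · exact Or.inl (h ▸ hyX)
        · exact Or.inl (h ▸ hzX)
        · exact Or.inr h
      have hrd := aux_key haX hnx hd
      refine aux_no_rd hconn ?_ hrd
      have hsub : X \ {x} ⊆ ({y, z} : Set V) := by
        rintro u ⟨huX, hux⟩
        simp only [Set.mem_singleton_iff] at hux
        have : u ∈ ({y, z, a} : Set V) := hNeq ▸ (hXadj u huX hux)
        rcases this with h | h | h
        · exact Or.inl h
        · exact Or.inr h
        · exact absurd (h ▸ huX) haX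
      have := Set.ncard_le_ncard hsub (hfin _)
      have := aux_pair_ncard y z
      omega
    · push_neg at hbig
      refine aux_no_rd hconn ?_ hd
      have h1 : (X \ {x}).ncard ≤ 1 := by
        rw [Set.ncard_le_one (Set.toFinite _)]
        intro p hp q hq
        exact hbig p hp q hq
      have hsub : X ⊆ insert x (X \ {x}) := by
        intro u huX
        by_cases hux : u = x
        · exact Or.inl hux
        · exact Or.inr ⟨huX, hux⟩
      have h2 := Set.ncard_le_ncard hsub (Set.toFinite _)
      have h3 := Set.ncard_insert_le x (X \ {x})
      omega
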